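/- Let 0<q<1, let p be the transition function defined in the context, and let (a_k)_{k≥0} be the sequence defined in the context. Then a is a strictly positive eigenfunction of the Markov operator of p with eigenvalue λ = 2/(q+q^{−1}) < 1: for every k ≥ 0, Σ_j p(k,j) a_j = (2/(q+q^{−1})) a_k, and a_k > 0 for all k. -/

import Mathlib

/-- Let `0 < q < 1`, let `p` be the transition function of the context and
`(a k)` the sequence of the context. Then `a` is a strictly positive eigenfunction of the
Markov operator of `p` with eigenvalue `λ = 2/(q+q⁻¹) < 1`: for every `k`,
`Σ_j p(k,j) a_j = (2/(q+q⁻¹)) a_k`, and `a_k > 0` for all `k`. -/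
theorem stmt9 (q : ℝ) (hq0 : 0 < q) (hq1 : q < 1) (p : ℕ → ℕ → ℝ)
    (hp1 : ∀ k : ℕ, p k (k + 1) = q⁻¹ * (1 - q ^ (2 * k + 2)) / (q + q⁻¹))
    (hp2 : ∀ k : ℕ, p k k = 2 * q ^ (2 * k + 1) / (q + q⁻¹))
    (hp3 : ∀ k : ℕ, 1 ≤ k → p k (k - 1) = q * (1 - q ^ (2 * k)) / (q + q⁻¹))
    (hp0 : ∀ k j : ℕ, j ≠ k + 1 → j ≠ k → ¬(1 ≤ k ∧ j = k - 1) → p k j = 0)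
    (a : ℕ → ℝ)
    (ha0 : a 0 = 1)
    (ha1 : 2 * (1 - q) * a 0 = q⁻¹ * (1 - q ^ 2) * a 1)
    (ha : ∀ k : ℕ, 1 ≤ k →
      2 * (1 - q ^ (2 * k + 1)) * a k
        = q⁻¹ * (1 - q ^ (2 * k + 2)) * a (k + 1) + q * (1 - q ^ (2 * k)) * a (k - 1)) :
    (∀ k : ℕ, 0 < a k) ∧ 2 / (q + q⁻¹) < 1 ∧
      ∀ k : ℕ, HasSum (fun j : ℕ => p k j * a j) (2 / (q + q⁻¹) * a k) := by
  have hqne : q ≠ 0 := ne_of_gt hq0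
  have hqi : 0 < q⁻¹ := inv_pos.mpr hq0
  have hiq : q⁻¹ * q = 1 := inv_mul_cancel₀ hqne
  have hs : 0 < q + q⁻¹ := by positivity
  have hsne : q + q⁻¹ ≠ 0 := ne_of_gt hs
  -- ha1 without inverses : 2*(1-q)*q*a 0 = (1-q^2)*a 1
  have ha1' : 2 * (1 - q) * q * 1 = (1 - q ^ 2) * a 1 := by
    have := congrArg (· * q) ha1
    rw [ha0] at this
    linear_combination this + (1 - q ^ 2) * a 1 * hiq
  have h2q : (1 + q) * a 1 = 2 * q := by
    refine mul_left_cancel₀ (show (1 - q) ≠ 0 by linarith) ?_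
    linear_combination -ha1'
  have ha1pos : 0 < a 1 := by nlinarith [h2q]
  -- key invariant
  have key : ∀ k : ℕ, 0 < a k ∧ q * a k ≤ a (k + 1) := by
    intro k
    induction k with
    | zero =>
      refine ⟨by rw [ha0]; norm_num, ?_⟩
      rw [ha0]
      nlinarith [h2q, mul_pos hq0 (show (0:ℝ) < 1 - q by linarith)]
    | succ n ih =>
      obtain ⟨h1, h2⟩ := ih
      have h3 : 0 < a (n + 1) := lt_of_lt_of_le (by positivity) h2
      refine ⟨h3, ?_⟩
      have hrec := ha (n + 1) (by omega)
      simp only [Nat.add_sub_cancel] at hrec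
      have e1 : q ^ (2 * (n + 1) + 1) = q ^ (2 * n + 2) * q := by ring
      have e2 : q ^ (2 * (n + 1) + 2) = q ^ (2 * n + 2) * q ^ 2 := by ring
      have e3 : q ^ (2 * (n + 1)) = q ^ (2 * n + 2) := by ring_nf
      rw [e1, e2, e3] at hrec
      set Q := q ^ (2 * n + 2) with hQ
      have hQpos : 0 < Q := pow_pos hq0 _
      have hQlt : Q ≤ q ^ 2 := pow_le_pow_of_le_one (le_of_lt hq0) (le_of_lt hq1) (by omega)
      have hq2 : q ^ 2 < 1 := by nlinarith
      -- multiply recurrence by q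
      have hrec2 : (1 - Q * q ^ 2) * a (n + 2) = 2 * q * (1 - Q * q) * a (n + 1) - q ^ 2 * (1 - Q) * a n := by
        have := congrArg (· * q) hrec
        linear_combination -this - (1 - Q * q ^ 2) * a (n + 2) * hiq
      have hpos : (0:ℝ) < 1 - Q * q ^ 2 := by nlinarith
      have step' : (1 - Q * q ^ 2) * (q * a (n + 1)) ≤ (1 - Q * q ^ 2) * a (n + 2) := by
        nlinarith [mul_le_mul_of_nonneg_left h2 (by nlinarith : (0:ℝ) ≤ q * (1 - Q)),
          mul_nonneg (mul_nonneg (mul_nonneg (le_of_lt hq0) (le_of_lt h3)) (le_of_lt hQpos)) (sq_nonneg (1 - q))]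
      exact le_of_mul_le_mul_left step' hpos
  have hposA : ∀ k : ℕ, 0 < a k := fun k => (key k).1
  refine ⟨hposA, ?_, ?_⟩
  · rw [div_lt_one hs]
    nlinarith [sq_nonneg (1 - q)]
  · intro k
    cases k with
    | zero =>
      have hv : ∀ j ∉ ({0, 1} : Finset ℕ), p 0 j * a j = 0 := by
        intro j hj
        simp only [Finset.mem_insert, Finset.mem_singleton, not_or] at hj
        rw [hp0 0 j (by omega) (by omega) (by rintro ⟨h, _⟩; omega), zero_mul]
      have hsum : ∑ j ∈ ({0, 1} : Finset ℕ), p 0 j * a j = 2 / (q + q⁻¹) * a 0 := by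
        rw [Finset.sum_insert (by norm_num), Finset.sum_singleton]
        rw [hp2 0, (hp1 0 : p 0 1 = _)]
        rw [ha0]
        norm_num
        field_simp
        linear_combination -ha1'
      exact hsum ▸ hasSum_sum_of_ne_finset_zero hv
    | succ n =>
      have hv : ∀ j ∉ ({n, n + 1, n + 2} : Finset ℕ), p (n + 1) j * a j = 0 := by
        intro j hj
        simp only [Finset.mem_insert, Finset.mem_singleton, not_or] at hj
        rw [hp0 (n + 1) j (by omega) (by omega) (by rintro ⟨h, he⟩; omega), zero_mul]
      have hrec := ha (n + 1) (by omega)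
      simp only [Nat.add_sub_cancel] at hrec
      have hp3' := hp3 (n + 1) (by omega)
      simp only [Nat.add_sub_cancel] at hp3'
      have hsum : ∑ j ∈ ({n, n + 1, n + 2} : Finset ℕ), p (n + 1) j * a j
          = 2 / (q + q⁻¹) * a (n + 1) := by
        rw [Finset.sum_insert (by simp), Finset.sum_insert (by simp), Finset.sum_singleton]
        rw [hp3', hp2 (n + 1), show n + 2 = (n + 1) + 1 from rfl, hp1 (n + 1)]
        field_simp
        linear_combination (-q) * hrec - a (n + 1 + 1) * (1 - q ^ 4 * q ^ (n * 2)) * hiq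
      exact hsum ▸ hasSum_sum_of_ne_finset_zero hv
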